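/- arXiv:1105.4444 — 4 statements merged into one kernel-verified Lean document; each statement's English description precedes it below -/
import Mathlib

section
/- Let G be a group, φ a homogeneous quasimorphism on G with defect D(φ), and g an element of the commutator subgroup [G,G]. Then |φ(g)| ≤ 2 · D(φ) · scl(g). -/
/-- The set of defect values of a function `φ : G → ℝ`. -/
def defectSet {G : Type*} [Group G] (φ : G → ℝ) : Set ℝ :=
  {x : ℝ | ∃ g h : G, x = |φ (g * h) - φ g - φ h|}

/-- The defect `D(φ) = sup_{g,h} |φ(gh) − φ(g) − φ(h)|`. -/
noncomputable def defect {G : Type*} [Group G] (φ : G → ℝ) : ℝ :=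
  sSup (defectSet φ)

/-- `φ` is a quasimorphism if its defect is finite. -/
def IsQuasimorphism {G : Type*} [Group G] (φ : G → ℝ) : Prop :=
  BddAbove (defectSet φ)

/-- `φ` is homogeneous if `φ(gⁿ) = n·φ(g)` for all `g` and all integers `n`. -/
def IsHomogeneous {G : Type*} [Group G] (φ : G → ℝ) : Prop :=
  ∀ (g : G) (n : ℤ), φ (g ^ n) = n * φ g

open scoped commutatorElement

/-- `g` can be written as a product of `n` commutators. -/
def IsProdOfCommutators {G : Type*} [Group G] (g : G) (n : ℕ) : Prop :=
  ∃ a b : Fin n → G, g = (List.ofFn fun i => ⁅a i, b i⁆).prod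

/-- The commutator length of `g`: the least `n` such that `g` is a product of `n`
commutators. -/
noncomputable def cl {G : Type*} [Group G] (g : G) : ℕ :=
  sInf {n : ℕ | IsProdOfCommutators g n}

/-- The stable commutator length `scl(g) = lim cl(gⁿ)/n = inf_{n ≥ 1} cl(gⁿ)/n`. -/
noncomputable def scl {G : Type*} [Group G] (g : G) : ℝ :=
  sInf {x : ℝ | ∃ n : ℕ, 0 < n ∧ x = (cl (g ^ n) : ℝ) / n}

section Aux

variable {G : Type*} [Group G] (φ : G → ℝ)

lemma aux_defect_bound (hq : IsQuasimorphism φ) (g h : G) :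
    |φ (g * h) - φ g - φ h| ≤ defect φ :=
  le_csSup hq ⟨g, h, rfl⟩

lemma aux_phi_one (hh : IsHomogeneous φ) : φ 1 = 0 := by
  have := hh 1 0
  simpa using this

lemma aux_phi_inv (hh : IsHomogeneous φ) (g : G) : φ g⁻¹ = -φ g := by
  have := hh g (-1)
  simpa using this

lemma aux_defect_nonneg (hq : IsQuasimorphism φ) : 0 ≤ defect φ :=
  le_trans (abs_nonneg _) (aux_defect_bound φ hq 1 1)

lemma aux_phi_conj (hq : IsQuasimorphism φ) (hh : IsHomogeneous φ) (h g : G) :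
    φ (h * g * h⁻¹) = φ g := by
  have key : ∀ n : ℕ, 0 < n → (n : ℝ) * |φ (h * g * h⁻¹) - φ g| ≤ 2 * defect φ := by
    intro n hn
    have e1 : φ ((h * g * h⁻¹) ^ n) = (n : ℝ) * φ (h * g * h⁻¹) := by
      have := hh (h * g * h⁻¹) (n : ℤ)
      simpa [zpow_natCast] using this
    have e2 : φ (g ^ n) = (n : ℝ) * φ g := by
      have := hh g (n : ℤ)
      simpa [zpow_natCast] using this
    have hc : (h * g * h⁻¹) ^ n = h * (g ^ n * h⁻¹) := by
      rw [conj_pow, mul_assoc]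
    have d1 : |φ (h * (g ^ n * h⁻¹)) - φ h - φ (g ^ n * h⁻¹)| ≤ defect φ :=
      aux_defect_bound φ hq h (g ^ n * h⁻¹)
    have d2 : |φ (g ^ n * h⁻¹) - φ (g ^ n) - φ h⁻¹| ≤ defect φ :=
      aux_defect_bound φ hq (g ^ n) h⁻¹
    have hinv : φ h⁻¹ = -φ h := aux_phi_inv φ hh h
    have : |φ (h * (g ^ n * h⁻¹)) - φ (g ^ n)| ≤ 2 * defect φ := by
      rw [hinv] at d2
      calc |φ (h * (g ^ n * h⁻¹)) - φ (g ^ n)|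
          = |(φ (h * (g ^ n * h⁻¹)) - φ h - φ (g ^ n * h⁻¹)) +
            (φ (g ^ n * h⁻¹) - φ (g ^ n) - -φ h)| := by ring_nf
        _ ≤ |φ (h * (g ^ n * h⁻¹)) - φ h - φ (g ^ n * h⁻¹)| +
            |φ (g ^ n * h⁻¹) - φ (g ^ n) - -φ h| := abs_add_le _ _
        _ ≤ defect φ + defect φ := add_le_add d1 d2
        _ = 2 * defect φ := by ring
    rw [← hc, e1, e2] at this
    calc (n : ℝ) * |φ (h * g * h⁻¹) - φ g|
        = |(n : ℝ) * φ (h * g * h⁻¹) - (n : ℝ) * φ g| := by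
          rw [← mul_sub, abs_mul, abs_of_nonneg (by positivity : (0:ℝ) ≤ (n:ℝ))]
      _ ≤ 2 * defect φ := this
  by_contra hne
  have habs : 0 < |φ (h * g * h⁻¹) - φ g| := by
    rw [abs_pos]
    intro h0
    exact hne (by linarith [sub_eq_zero.mp h0])
  obtain ⟨n, hn⟩ := exists_nat_gt (2 * defect φ / |φ (h * g * h⁻¹) - φ g|)
  have hn0 : 0 < n := by
    by_contra hn0
    push_neg at hn0
    interval_cases n
    · simp at hn
      have := aux_defect_nonneg φ hq
      have := div_nonneg (by linarith : (0:ℝ) ≤ 2 * defect φ) (le_of_lt habs)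
      linarith
  have := key n hn0
  have h2 : 2 * defect φ / |φ (h * g * h⁻¹) - φ g| < (n : ℝ) := hn
  have := (div_lt_iff₀ habs).mp h2
  linarith

lemma aux_phi_comm (hq : IsQuasimorphism φ) (hh : IsHomogeneous φ) (a b : G) :
    |φ ⁅a, b⁆| ≤ defect φ := by
  have hd : ⁅a, b⁆ = (a * b * a⁻¹) * b⁻¹ := by
    rw [commutatorElement_def]
  have d1 := aux_defect_bound φ hq (a * b * a⁻¹) b⁻¹
  rw [aux_phi_conj φ hq hh a b, aux_phi_inv φ hh b] at d1
  rw [hd]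
  calc |φ (a * b * a⁻¹ * b⁻¹)| = |φ (a * b * a⁻¹ * b⁻¹) - φ b - -φ b| := by ring_nf
    _ ≤ defect φ := d1

lemma aux_phi_list (hq : IsQuasimorphism φ) (hh : IsHomogeneous φ) :
    ∀ l : List G, (∀ x ∈ l, ∃ a b : G, x = ⁅a, b⁆) →
      |φ l.prod| ≤ 2 * l.length * defect φ := by
  intro l
  induction l with
  | nil =>
    intro _
    simp [aux_phi_one φ hh]
  | cons x l ih =>
    intro hl
    have hx : ∃ a b : G, x = ⁅a, b⁆ := hl x (List.mem_cons_self)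
    obtain ⟨a, b, rfl⟩ := hx
    have h1 : |φ ⁅a, b⁆| ≤ defect φ := aux_phi_comm φ hq hh a b
    have h2 := ih (fun y hy => hl y (List.mem_cons_of_mem _ hy))
    have h3 := aux_defect_bound φ hq ⁅a, b⁆ l.prod
    have hD := aux_defect_nonneg φ hq
    simp only [List.prod_cons, List.length_cons]
    have : |φ (⁅a, b⁆ * l.prod)| ≤ |φ ⁅a, b⁆| + |φ l.prod| + defect φ := by
      calc |φ (⁅a, b⁆ * l.prod)|
          = |(φ (⁅a, b⁆ * l.prod) - φ ⁅a, b⁆ - φ l.prod) + φ ⁅a, b⁆ + φ l.prod| := by ring_nf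
        _ ≤ |(φ (⁅a, b⁆ * l.prod) - φ ⁅a, b⁆ - φ l.prod) + φ ⁅a, b⁆| + |φ l.prod| := abs_add_le _ _
        _ ≤ |φ (⁅a, b⁆ * l.prod) - φ ⁅a, b⁆ - φ l.prod| + |φ ⁅a, b⁆| + |φ l.prod| := by
            have := abs_add_le (φ (⁅a, b⁆ * l.prod) - φ ⁅a, b⁆ - φ l.prod) (φ ⁅a, b⁆)
            linarith
        _ ≤ |φ ⁅a, b⁆| + |φ l.prod| + defect φ := by linarith
    push_cast
    nlinarith [this]

lemma aux_list_eq_ofFn : ∀ l : List G, (∀ x ∈ l, ∃ a b : G, x = ⁅a, b⁆) →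
    ∃ a b : Fin l.length → G, l = List.ofFn fun i => ⁅a i, b i⁆ := by
  intro l
  induction l with
  | nil => exact fun _ => ⟨Fin.elim0, Fin.elim0, by simp⟩
  | cons x l ih =>
    intro hl
    obtain ⟨a0, b0, rfl⟩ := hl x (List.mem_cons_self)
    obtain ⟨a, b, he⟩ := ih (fun y hy => hl y (List.mem_cons_of_mem _ hy))
    refine ⟨Fin.cons a0 a, Fin.cons b0 b, ?_⟩
    rw [List.ofFn_succ]
    simp only [Fin.cons_zero, Fin.cons_succ]
    rw [← he]

/-- product-of-commutators as a list statement. -/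
lemma aux_isProd_iff_list {g : G} {n : ℕ} :
    IsProdOfCommutators g n ↔
      ∃ l : List G, l.length = n ∧ (∀ x ∈ l, ∃ a b : G, x = ⁅a, b⁆) ∧ g = l.prod := by
  constructor
  · rintro ⟨a, b, rfl⟩
    refine ⟨List.ofFn fun i => ⁅a i, b i⁆, by simp, ?_, rfl⟩
    intro x hx
    rw [List.mem_ofFn] at hx
    obtain ⟨i, rfl⟩ := hx
    exact ⟨a i, b i, rfl⟩
  · rintro ⟨l, rfl, hl, rfl⟩
    obtain ⟨a, b, he⟩ := aux_list_eq_ofFn l hl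
    exact ⟨a, b, by rw [← he]⟩

lemma aux_exists_isProd {g : G} (hg : g ∈ commutator G) :
    ∃ n : ℕ, IsProdOfCommutators g n := by
  rw [commutator_eq_closure] at hg
  have key : ∃ l : List G, (∀ x ∈ l, ∃ a b : G, x = ⁅a, b⁆) ∧ g = l.prod := by
    refine Subgroup.closure_induction ?_ ?_ ?_ ?_ hg
    · rintro x ⟨a, b, rfl⟩
      exact ⟨[⁅a, b⁆], by simp, by simp⟩
    · exact ⟨[], by simp, by simp⟩
    · rintro x y _ _ ⟨l1, hl1, rfl⟩ ⟨l2, hl2, rfl⟩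
      refine ⟨l1 ++ l2, ?_, by simp⟩
      intro z hz
      rcases List.mem_append.mp hz with h | h
      · exact hl1 z h
      · exact hl2 z h
    · rintro x _ ⟨l, hl, rfl⟩
      refine ⟨(l.map (fun y => y⁻¹)).reverse, ?_, (List.prod_inv_reverse l)⟩
      intro z hz
      rw [List.mem_reverse, List.mem_map] at hz
      obtain ⟨y, hy, rfl⟩ := hz
      obtain ⟨a, b, rfl⟩ := hl y hy
      exact ⟨b, a, commutatorElement_inv a b⟩
  obtain ⟨l, hl, rfl⟩ := key
  exact ⟨l.length, aux_isProd_iff_list.mpr ⟨l, rfl, hl, rfl⟩⟩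

end Aux

/-- Bavard's inequality: `|φ(g)| ≤ 2 · D(φ) · scl(g)` for a homogeneous quasimorphism
`φ` and `g ∈ [G,G]`. -/
theorem abs_le_two_defect_mul_scl {G : Type*} [Group G] (φ : G → ℝ)
    (hq : IsQuasimorphism φ) (hh : IsHomogeneous φ) (g : G) (hg : g ∈ commutator G) :
    |φ g| ≤ 2 * defect φ * scl g := by
  have hD := aux_defect_nonneg φ hq
  -- the key pointwise bound
  have key : ∀ x ∈ {x : ℝ | ∃ n : ℕ, 0 < n ∧ x = (cl (g ^ n) : ℝ) / n},
      |φ g| ≤ 2 * defect φ * x := by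
    rintro x ⟨n, hn, rfl⟩
    have hgn : g ^ n ∈ commutator G := (commutator G).pow_mem hg n
    have hne : {m : ℕ | IsProdOfCommutators (g ^ n) m}.Nonempty := aux_exists_isProd hgn
    have hmem : IsProdOfCommutators (g ^ n) (cl (g ^ n)) := Nat.sInf_mem hne
    obtain ⟨l, hlen, hl, hprod⟩ := aux_isProd_iff_list.mp hmem
    have hb : |φ (g ^ n)| ≤ 2 * (cl (g ^ n) : ℝ) * defect φ := by
      have := aux_phi_list φ hq hh l hl
      rw [← hprod, hlen] at this
      exact_mod_cast this
    have hpow : φ (g ^ n) = (n : ℝ) * φ g := by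
      have := hh g (n : ℤ)
      simpa [zpow_natCast] using this
    rw [hpow, abs_mul, abs_of_nonneg (by positivity : (0:ℝ) ≤ (n:ℝ))] at hb
    have hn' : (0:ℝ) < n := by exact_mod_cast hn
    rw [mul_comm (2 * defect φ) _, div_mul_eq_mul_div, le_div_iff₀ hn']
    calc |φ g| * n = (n : ℝ) * |φ g| := by ring
      _ ≤ 2 * (cl (g ^ n) : ℝ) * defect φ := hb
      _ = (cl (g ^ n) : ℝ) * (2 * defect φ) := by ring
  have hne : {x : ℝ | ∃ n : ℕ, 0 < n ∧ x = (cl (g ^ n) : ℝ) / n}.Nonempty :=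
    ⟨(cl (g ^ 1) : ℝ) / (1:ℕ), 1, one_pos, by norm_num⟩
  rcases eq_or_lt_of_le hD with hD0 | hD0
  · -- defect = 0
    obtain ⟨x, hx⟩ := hne
    have := key x hx
    rw [← hD0] at this
    simp at this
    rw [← hD0]
    simpa using this
  · -- defect > 0
    have : |φ g| / (2 * defect φ) ≤ scl g := by
      apply le_csInf hne
      intro b hb
      rw [div_le_iff₀ (by linarith : (0:ℝ) < 2 * defect φ)]
      calc |φ g| ≤ 2 * defect φ * b := key b hb
        _ = b * (2 * defect φ) := by ring
    calc |φ g| = |φ g| / (2 * defect φ) * (2 * defect φ) := by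
          field_simp
      _ ≤ scl g * (2 * defect φ) := by
          apply mul_le_mul_of_nonneg_right this (by linarith)
      _ = 2 * defect φ * scl g := by ring
end

section
/- Let G be a group, H a subgroup of G, and suppose there exists a sequence of elements g₁, g₂, g₃, … of G such that for all indices i ≠ j and all x, y ∈ H, the conjugate gᵢ x gᵢ⁻¹ commutes with gⱼ y gⱼ⁻¹. Then every homogeneous quasimorphism φ on G restricts to a homomorphism on H, i.e. φ(ab) = φ(a) + φ(b) for all a, b ∈ H. -/
lemma aux_eq_zero_of_nat_mul_abs_le {t C : ℝ} (h : ∀ n : ℕ, (n : ℝ) * |t| ≤ C) : t = 0 := by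
  by_contra ht
  have habs : 0 < |t| := abs_pos.mpr ht
  obtain ⟨n, hn⟩ := exists_nat_gt (C / |t|)
  have h2 : C < (n : ℝ) * |t| := (div_lt_iff₀ habs).mp hn
  linarith [h n]

/-- Additivity on commuting elements. -/
lemma aux_commute_add {G : Type*} [Group G] (φ : G → ℝ) (D : ℝ)
    (hb : ∀ g h : G, |φ (g * h) - φ g - φ h| ≤ D)
    (hh : IsHomogeneous φ) {u v : G} (huv : Commute u v) :
    φ (u * v) = φ u + φ v := by
  have key : ∀ n : ℕ, (n : ℝ) * |φ (u * v) - φ u - φ v| ≤ D := by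
    intro n
    have h1 : (u * v) ^ (n : ℤ) = u ^ (n : ℤ) * v ^ (n : ℤ) := huv.mul_zpow n
    have h2 := hb (u ^ (n : ℤ)) (v ^ (n : ℤ))
    rw [← h1, hh (u * v) n, hh u n, hh v n] at h2
    push_cast at h2
    calc (n : ℝ) * |φ (u * v) - φ u - φ v|
        = |(n : ℝ)| * |φ (u * v) - φ u - φ v| := by
          rw [abs_of_nonneg (n.cast_nonneg : (0:ℝ) ≤ n)]
      _ = |(n : ℝ) * (φ (u * v) - φ u - φ v)| := (abs_mul _ _).symm
      _ = |(n : ℝ) * φ (u * v) - (n : ℝ) * φ u - (n : ℝ) * φ v| := by congr 1; ring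
      _ ≤ D := h2
  have := aux_eq_zero_of_nat_mul_abs_le key
  linarith [this]

/-- Conjugation invariance. -/
lemma aux_conj_inv {G : Type*} [Group G] (φ : G → ℝ) (D : ℝ)
    (hb : ∀ g h : G, |φ (g * h) - φ g - φ h| ≤ D)
    (hh : IsHomogeneous φ) (g x : G) :
    φ (g * x * g⁻¹) = φ x := by
  have key : ∀ n : ℕ, (n : ℝ) * |φ (g * x * g⁻¹) - φ x|
      ≤ D + D + |φ g| + |φ g⁻¹| := by
    intro n
    have h1 : (g * x * g⁻¹) ^ (n : ℤ) = g * x ^ (n : ℤ) * g⁻¹ := by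
      rw [conj_zpow]
    have e1 := hb g (x ^ (n : ℤ) * g⁻¹)
    have e2 := hb (x ^ (n : ℤ)) g⁻¹
    have h2 : g * (x ^ (n : ℤ) * g⁻¹) = (g * x * g⁻¹) ^ (n : ℤ) := by
      rw [h1, mul_assoc]
    rw [h2, hh (g * x * g⁻¹) n] at e1
    rw [hh x n] at e2
    push_cast at e1 e2
    have h3 : (n : ℝ) * |φ (g * x * g⁻¹) - φ x|
        = |(n : ℝ) * φ (g * x * g⁻¹) - (n : ℝ) * φ x| := by
      calc (n : ℝ) * |φ (g * x * g⁻¹) - φ x|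
          = |(n : ℝ)| * |φ (g * x * g⁻¹) - φ x| := by
            rw [abs_of_nonneg (n.cast_nonneg : (0:ℝ) ≤ n)]
        _ = |(n : ℝ) * (φ (g * x * g⁻¹) - φ x)| := (abs_mul _ _).symm
        _ = |(n : ℝ) * φ (g * x * g⁻¹) - (n : ℝ) * φ x| := by congr 1; ring
    rw [h3]
    rw [abs_le] at e1 e2
    rw [abs_le]
    constructor
    · linarith [neg_abs_le (φ g), neg_abs_le (φ g⁻¹), e1.1, e2.1]
    · linarith [le_abs_self (φ g), le_abs_self (φ g⁻¹), e1.2, e2.2]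
  have := aux_eq_zero_of_nat_mul_abs_le key
  linarith [this]

/-- Ordered product `f 0 * f 1 * ⋯ * f (n-1)`. -/
def pprod {G : Type*} [Group G] (f : ℕ → G) : ℕ → G
  | 0 => 1
  | n + 1 => pprod f n * f n

lemma pprod_commute {G : Type*} [Group G] {f : ℕ → G} {z : G} {n : ℕ}
    (h : ∀ i < n, Commute (f i) z) : Commute (pprod f n) z := by
  induction n with
  | zero => exact Commute.one_left z
  | succ n ih =>
      exact (ih (fun i hi => h i (Nat.lt_succ_of_lt hi))).mul_left (h n (Nat.lt_succ_self n))

lemma pprod_phi {G : Type*} [Group G] (φ : G → ℝ) (D : ℝ)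
    (hb : ∀ g h : G, |φ (g * h) - φ g - φ h| ≤ D)
    (hh : IsHomogeneous φ) {f : ℕ → G} {c : ℝ}
    (hpair : ∀ i j : ℕ, i ≠ j → Commute (f i) (f j))
    (hval : ∀ i, φ (f i) = c) :
    ∀ n : ℕ, φ (pprod f n) = n * c := by
  intro n
  induction n with
  | zero =>
      have h1 : φ (1 : G) = 0 := by simpa using hh 1 0
      simp [pprod, h1]
  | succ n ih =>
      have hc : Commute (pprod f n) (f n) :=
        pprod_commute (fun i hi => hpair i n (Nat.ne_of_lt hi))
      have := aux_commute_add φ D hb hh hc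
      rw [pprod, this, ih, hval n]
      push_cast; ring

lemma pprod_mul {G : Type*} [Group G] {f k : ℕ → G}
    (h : ∀ i j : ℕ, i ≠ j → Commute (f i) (k j)) :
    ∀ n : ℕ, pprod (fun i => f i * k i) n = pprod f n * pprod k n := by
  intro n
  induction n with
  | zero => simp [pprod]
  | succ n ih =>
      have hc : Commute (pprod k n) (f n) :=
        pprod_commute (fun i hi => (h n i (Nat.ne_of_lt hi).symm).symm)
      show pprod (fun i => f i * k i) n * (f n * k n) = (pprod f n * f n) * (pprod k n * k n)
      rw [ih]
      calc pprod f n * pprod k n * (f n * k n)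
          = pprod f n * (pprod k n * f n) * k n := by group
        _ = pprod f n * (f n * pprod k n) * k n := by rw [hc.eq]
        _ = (pprod f n * f n) * (pprod k n * k n) := by group

/-- If `H ≤ G` admits a sequence `g₁, g₂, …` of elements of `G` such that for `i ≠ j`
the conjugates `gᵢ H gᵢ⁻¹` and `gⱼ H gⱼ⁻¹` commute elementwise, then every homogeneous
quasimorphism on `G` restricts to a homomorphism on `H`. -/
theorem homogeneous_quasimorphism_restricts_to_hom {G : Type*} [Group G]
    (H : Subgroup G) (g : ℕ → G)
    (hcomm : ∀ i j : ℕ, i ≠ j → ∀ x ∈ H, ∀ y ∈ H,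
      Commute (g i * x * (g i)⁻¹) (g j * y * (g j)⁻¹))
    (φ : G → ℝ) (hq : IsQuasimorphism φ) (hh : IsHomogeneous φ) :
    ∀ a ∈ H, ∀ b ∈ H, φ (a * b) = φ a + φ b := by
  obtain ⟨D, hD⟩ := hq
  have hb : ∀ u v : G, |φ (u * v) - φ u - φ v| ≤ D := fun u v => hD ⟨u, v, rfl⟩
  intro a ha b hbH
  set fa : ℕ → G := fun i => g i * a * (g i)⁻¹ with hfa
  set fb : ℕ → G := fun i => g i * b * (g i)⁻¹ with hfb
  set fab : ℕ → G := fun i => g i * (a * b) * (g i)⁻¹ with hfab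
  have habH : a * b ∈ H := H.mul_mem ha hbH
  have hfab_eq : ∀ i, fab i = fa i * fb i := by
    intro i; simp only [hfa, hfb, hfab]; group
  have hpa : ∀ i j : ℕ, i ≠ j → Commute (fa i) (fa j) :=
    fun i j hij => hcomm i j hij a ha a ha
  have hpb : ∀ i j : ℕ, i ≠ j → Commute (fb i) (fb j) :=
    fun i j hij => hcomm i j hij b hbH b hbH
  have hpab : ∀ i j : ℕ, i ≠ j → Commute (fab i) (fab j) :=
    fun i j hij => hcomm i j hij (a * b) habH (a * b) habH
  have hpx : ∀ i j : ℕ, i ≠ j → Commute (fa i) (fb j) :=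
    fun i j hij => hcomm i j hij a ha b hbH
  have hva : ∀ i, φ (fa i) = φ a := fun i => aux_conj_inv φ D hb hh (g i) a
  have hvb : ∀ i, φ (fb i) = φ b := fun i => aux_conj_inv φ D hb hh (g i) b
  have hvab : ∀ i, φ (fab i) = φ (a * b) :=
    fun i => aux_conj_inv φ D hb hh (g i) (a * b)
  have key : ∀ n : ℕ, (n : ℝ) * |φ (a * b) - φ a - φ b| ≤ D := by
    intro n
    have h1 : pprod fab n = pprod fa n * pprod fb n := by
      have : pprod (fun i => fa i * fb i) n = pprod fa n * pprod fb n := pprod_mul hpx n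
      rw [← this]
      congr 1
      funext i
      exact hfab_eq i
    have h2 := hb (pprod fa n) (pprod fb n)
    rw [← h1, pprod_phi φ D hb hh hpab hvab n, pprod_phi φ D hb hh hpa hva n,
      pprod_phi φ D hb hh hpb hvb n] at h2
    calc (n : ℝ) * |φ (a * b) - φ a - φ b|
        = |(n : ℝ)| * |φ (a * b) - φ a - φ b| := by
          rw [abs_of_nonneg (n.cast_nonneg : (0:ℝ) ≤ n)]
      _ = |(n : ℝ) * (φ (a * b) - φ a - φ b)| := (abs_mul _ _).symm
      _ = |(n : ℝ) * φ (a * b) - (n : ℝ) * φ a - (n : ℝ) * φ b| := by congr 1; ring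
      _ ≤ D := h2
  have := aux_eq_zero_of_nat_mul_abs_le key
  linarith [this]
end

section
/- Let G be a group such that any two elements a, b ∈ G are contained in a subgroup H ≤ G admitting a sequence of elements g₁, g₂, g₃, … of G with the property that for all indices i ≠ j and all x, y ∈ H, the conjugate gᵢ x gᵢ⁻¹ commutes with gⱼ y gⱼ⁻¹. Then every homogeneous quasimorphism on G is a homomorphism. -/
/-- If `|n • X| ≤ C` for every natural `n`, then `X = 0`. -/
lemma aux_abs_nsmul_le {X C : ℝ} (h : ∀ n : ℕ, |(n : ℝ) * X| ≤ C) : X = 0 := by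
  by_contra hX
  have hx : 0 < |X| := abs_pos.mpr hX
  obtain ⟨n, hn⟩ := exists_nat_gt (C / |X|)
  have h1 : C < (n : ℝ) * |X| := (div_lt_iff₀ hx).mp hn
  have h2 := h n
  rw [abs_mul, abs_of_nonneg (by positivity : (0:ℝ) ≤ (n:ℝ))] at h2
  linarith

/-- If any two elements of `G` lie in a subgroup `H` admitting a sequence `g₁, g₂, …`
of elements of `G` whose distinct conjugates of `H` commute elementwise, then every
homogeneous quasimorphism on `G` is a homomorphism. -/
theorem homogeneous_quasimorphism_is_hom {G : Type*} [Group G]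
    (hyp : ∀ a b : G, ∃ H : Subgroup G, a ∈ H ∧ b ∈ H ∧ ∃ g : ℕ → G,
      ∀ i j : ℕ, i ≠ j → ∀ x ∈ H, ∀ y ∈ H,
        Commute (g i * x * (g i)⁻¹) (g j * y * (g j)⁻¹))
    (φ : G → ℝ) (hq : IsQuasimorphism φ) (hh : IsHomogeneous φ) :
    ∀ a b : G, φ (a * b) = φ a + φ b := by
  have hD : ∀ g h : G, |φ (g * h) - φ g - φ h| ≤ defect φ := fun g h =>
    le_csSup hq ⟨g, h, rfl⟩
  have hpow : ∀ (g : G) (n : ℕ), φ (g ^ n) = n * φ g := by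
    intro g n
    have := hh g (n : ℤ)
    simpa using this
  have hinv : ∀ g : G, φ g⁻¹ = -φ g := by
    intro g
    have := hh g (-1)
    simpa using this
  -- homogeneous quasimorphisms are conjugation invariant
  have hconj : ∀ g x : G, φ (g * x * g⁻¹) = φ x := by
    intro g x
    have key : ∀ n : ℕ, |(n : ℝ) * (φ (g * x * g⁻¹) - φ x)| ≤ 2 * defect φ := by
      intro n
      have e1 : (g * x * g⁻¹) ^ n = g * (x ^ n * g⁻¹) := by
        rw [conj_pow]; group
      have d1 := hD g (x ^ n * g⁻¹)
      rw [← e1, hpow (g * x * g⁻¹) n] at d1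
      have d2 := hD (x ^ n) g⁻¹
      rw [hpow x n, hinv g] at d2
      have e2 : (n : ℝ) * (φ (g * x * g⁻¹) - φ x)
          = ((n : ℝ) * φ (g * x * g⁻¹) - φ g - φ (x ^ n * g⁻¹))
            + (φ (x ^ n * g⁻¹) - (n : ℝ) * φ x - -φ g) := by ring
      rw [e2]
      calc |_ + _| ≤ _ + _ := abs_add_le _ _
        _ ≤ 2 * defect φ := by linarith
    have := aux_abs_nsmul_le key
    linarith
  -- homogeneous quasimorphisms are additive on commuting elements
  have hcomm : ∀ s t : G, Commute s t → φ (s * t) = φ s + φ t := by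
    intro s t hst
    have key : ∀ n : ℕ, |(n : ℝ) * (φ (s * t) - φ s - φ t)| ≤ defect φ := by
      intro n
      have d := hD (s ^ n) (t ^ n)
      rw [← hst.mul_pow n, hpow, hpow, hpow] at d
      have e : (n : ℝ) * (φ (s * t) - φ s - φ t)
          = (n : ℝ) * φ (s * t) - (n : ℝ) * φ s - (n : ℝ) * φ t := by ring
      rw [e]; exact d
    have := aux_abs_nsmul_le key
    linarith
  intro a b
  obtain ⟨H, haH, hbH, g, hg⟩ := hyp a b
  -- products of conjugates
  let P : G → ℕ → G := fun x n => Nat.rec 1 (fun k p => p * (g k * x * (g k)⁻¹)) n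
  have hP0 : ∀ x, P x 0 = 1 := fun _ => rfl
  have hPs : ∀ x n, P x (n + 1) = P x n * (g n * x * (g n)⁻¹) := fun _ _ => rfl
  -- everything commutes appropriately
  have hPcomm : ∀ x, x ∈ H → ∀ y, y ∈ H → ∀ n j, n ≤ j →
      Commute (P x n) (g j * y * (g j)⁻¹) := by
    intro x hx y hy n
    induction n with
    | zero => intro j _; rw [hP0]; exact Commute.one_left _
    | succ k ih =>
      intro j hj
      rw [hPs]
      exact (ih j (Nat.le_of_succ_le hj)).mul_left
        (hg k j (by omega) x hx y hy)
  -- φ on products of conjugates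
  have hPval : ∀ x, x ∈ H → ∀ n : ℕ, φ (P x n) = n * φ x := by
    intro x hx n
    induction n with
    | zero =>
      have h1 : φ (1 : G) = 0 := by simpa using hpow 1 0
      rw [hP0, h1]; simp
    | succ k ih =>
      rw [hPs, hcomm _ _ (hPcomm x hx x hx k k le_rfl), ih, hconj]
      push_cast; ring
  -- splitting the product for a*b
  have hsplit : ∀ n : ℕ, P (a * b) n = P a n * P b n := by
    intro n
    induction n with
    | zero => simp [hP0]
    | succ k ih =>
      rw [hPs, hPs, hPs, ih]
      have e : g k * (a * b) * (g k)⁻¹ = (g k * a * (g k)⁻¹) * (g k * b * (g k)⁻¹) := by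
        group
      rw [e]
      have hc : Commute (P b k) (g k * a * (g k)⁻¹) := hPcomm b hbH a haH k k le_rfl
      calc P a k * P b k * ((g k * a * (g k)⁻¹) * (g k * b * (g k)⁻¹))
          = P a k * (P b k * (g k * a * (g k)⁻¹)) * (g k * b * (g k)⁻¹) := by
            group
        _ = P a k * ((g k * a * (g k)⁻¹) * P b k) * (g k * b * (g k)⁻¹) := by
            rw [hc.eq]
        _ = P a k * (g k * a * (g k)⁻¹) * (P b k * (g k * b * (g k)⁻¹)) := by
            group
  -- conclude
  have key : ∀ n : ℕ, |(n : ℝ) * (φ (a * b) - φ a - φ b)| ≤ defect φ := by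
    intro n
    have d := hD (P a n) (P b n)
    rw [← hsplit n, hPval _ (H.mul_mem haH hbH), hPval _ haH, hPval _ hbH] at d
    have e : (n : ℝ) * (φ (a * b) - φ a - φ b)
        = (n : ℝ) * φ (a * b) - (n : ℝ) * φ a - (n : ℝ) * φ b := by ring
    rw [e]; exact d
  have := aux_abs_nsmul_le key
  linarith
end

section
/- Let G be a group such that every homogeneous quasimorphism on G is a homomorphism. Then scl(g) = 0 for every element g of the commutator subgroup [G,G]. -/
open scoped commutatorElement

section ProdComm
variable {G : Type*} [Group G]

theorem isProd_one : IsProdOfCommutators (1 : G) 0 :=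
  ⟨Fin.elim0, Fin.elim0, by simp⟩

theorem isProd_comm (a b : G) : IsProdOfCommutators ⁅a, b⁆ 1 :=
  ⟨fun _ => a, fun _ => b, by simp⟩

theorem isProd_cons {v : G} {m : ℕ} (x y : G) (h : IsProdOfCommutators v m) :
    IsProdOfCommutators (⁅x, y⁆ * v) (m + 1) := by
  obtain ⟨a, b, rfl⟩ := h
  refine ⟨Fin.cons x a, Fin.cons y b, ?_⟩
  rw [List.ofFn_succ]
  simp [Fin.cons_zero, Fin.cons_succ]

theorem isProd_destruct {v : G} {m : ℕ} (h : IsProdOfCommutators v (m + 1)) :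
    ∃ (x y w : G), IsProdOfCommutators w m ∧ v = ⁅x, y⁆ * w := by
  obtain ⟨a, b, rfl⟩ := h
  refine ⟨a 0, b 0, _, ⟨fun i => a i.succ, fun i => b i.succ, rfl⟩, ?_⟩
  rw [List.ofFn_succ]; simp

theorem isProd_mul {u v : G} {m k : ℕ} (hu : IsProdOfCommutators u m)
    (hv : IsProdOfCommutators v k) : IsProdOfCommutators (u * v) (m + k) := by
  induction m generalizing u with
  | zero =>
    obtain ⟨a, b, rfl⟩ := hu
    simpa using hv
  | succ n ih =>
    obtain ⟨x, y, w, hw, rfl⟩ := isProd_destruct hu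
    have he : n + 1 + k = n + k + 1 := by omega
    rw [he, mul_assoc]
    exact isProd_cons x y (ih hw)

theorem isProd_inv {v : G} {m : ℕ} (h : IsProdOfCommutators v m) :
    IsProdOfCommutators v⁻¹ m := by
  induction m generalizing v with
  | zero => obtain ⟨a, b, rfl⟩ := h; exact ⟨a, b, by simp⟩
  | succ n ih =>
    obtain ⟨x, y, w, hw, rfl⟩ := isProd_destruct h
    have h1 : IsProdOfCommutators ⁅y, x⁆ 1 := isProd_comm y x
    have := isProd_mul (ih hw) h1
    rw [mul_inv_rev, commutatorElement_inv]
    exact this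

theorem isProd_mono {v : G} {m m' : ℕ} (h : IsProdOfCommutators v m) (hm : m ≤ m') :
    IsProdOfCommutators v m' := by
  induction m' with
  | zero => simpa [Nat.le_zero.mp hm] using h
  | succ n ih =>
    rcases Nat.lt_or_ge m (n+1) with h1 | h1
    · have := isProd_cons (1:G) (1:G) (ih (by omega))
      simpa using this
    · have : m = n + 1 := le_antisymm hm h1
      rwa [this] at h

theorem exists_isProd_of_mem_commutator {g : G} (hg : g ∈ commutator G) :
    ∃ m, IsProdOfCommutators g m := by
  rw [commutator_eq_closure] at hg
  induction hg using Subgroup.closure_induction with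
  | mem x hx =>
    obtain ⟨a, b, rfl⟩ := hx
    exact ⟨1, isProd_comm a b⟩
  | one => exact ⟨0, isProd_one⟩
  | mul x y _ _ hx hy =>
    obtain ⟨m, hm⟩ := hx; obtain ⟨k, hk⟩ := hy
    exact ⟨m + k, isProd_mul hm hk⟩
  | inv x _ hx => obtain ⟨m, hm⟩ := hx; exact ⟨m, isProd_inv hm⟩

theorem cl_le {g : G} {m : ℕ} (h : IsProdOfCommutators g m) : cl g ≤ m :=
  Nat.sInf_le h

end ProdComm
namespace SclAux
open scoped Classical
variable {G : Type*} [Group G]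

/-- A letter: (conjugator, base, sign). -/
abbrev Letter (G : Type*) := G × G × Bool

def lval : Letter G → G := fun p => p.1 * (cond p.2.2 p.2.1 p.2.1⁻¹) * p.1⁻¹

noncomputable def cnt (x : G) : Letter G → ℤ := fun p =>
  if p.2.1 = x then (cond p.2.2 1 (-1)) else 0

def prodOf (L : List (Letter G)) : G := (L.map lval).prod

noncomputable def cntL (x : G) (L : List (Letter G)) : ℤ := (L.map (cnt x)).sum

@[simp] theorem prodOf_nil : prodOf ([] : List (Letter G)) = 1 := rfl

@[simp] theorem prodOf_cons (p : Letter G) (L : List (Letter G)) :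
    prodOf (p :: L) = lval p * prodOf L := by simp [prodOf]

@[simp] theorem prodOf_append (L₁ L₂ : List (Letter G)) :
    prodOf (L₁ ++ L₂) = prodOf L₁ * prodOf L₂ := by simp [prodOf]

@[simp] theorem cntL_nil (x : G) : cntL x ([] : List (Letter G)) = 0 := rfl

@[simp] theorem cntL_cons (x : G) (p : Letter G) (L : List (Letter G)) :
    cntL x (p :: L) = cnt x p + cntL x L := by simp [cntL]

@[simp] theorem cntL_append (x : G) (L₁ L₂ : List (Letter G)) :
    cntL x (L₁ ++ L₂) = cntL x L₁ + cntL x L₂ := by simp [cntL]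

theorem list_sum_mul_nonneg (c : ℤ) (L : List ℤ) (h : ∀ z ∈ L, 0 ≤ c * z) :
    0 ≤ c * L.sum := by
  induction L with
  | nil => simp
  | cons a t ih =>
    simp only [List.sum_cons, mul_add]
    have h1 := h a (by simp)
    have h2 := ih (fun z hz => h z (by simp [hz]))
    omega

theorem exists_opposite {x : G} {ε : Bool} {L₁ : List (Letter G)}
    (h : cntL x L₁ = - (cond ε 1 (-1))) :
    ∃ (t : G) (P Q : List (Letter G)), L₁ = P ++ (t, x, !ε) :: Q := by
  have hexist : ∃ q ∈ L₁, q.2.1 = x ∧ q.2.2 = !ε := by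
    by_contra hno
    push_neg at hno
    have hsgn : ∀ q ∈ L₁, 0 ≤ (cond ε 1 (-1) : ℤ) * cnt x q := by
      intro q hq
      by_cases hb : q.2.1 = x
      · have hs : q.2.2 = ε := by
          have := hno q hq hb
          cases hqs : q.2.2 <;> cases hε : ε <;> simp_all
        have hc : cnt x q = cond ε 1 (-1) := by simp [cnt, hb, hs]
        rw [hc]
        cases ε <;> norm_num
      · simp [cnt, hb]
    have h0 : 0 ≤ (cond ε 1 (-1) : ℤ) * cntL x L₁ := by
      apply list_sum_mul_nonneg
      intro z hz
      simp only [List.mem_map] at hz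
      obtain ⟨q, hq, rfl⟩ := hz
      exact hsgn q hq
    rw [h] at h0
    cases ε <;> simp at h0
  obtain ⟨q, hqmem, hqbase, hqsign⟩ := hexist
  obtain ⟨P, Q, hPQ⟩ := List.append_of_mem hqmem
  refine ⟨q.1, P, Q, ?_⟩
  rw [hPQ]
  congr 1
  · rw [show q = (q.1, q.2.1, q.2.2) from rfl, hqbase, hqsign]

/-- swap: `u * lval l = lval (u*l.1, base, sign) * u`. -/
theorem mul_lval (u : G) (l : Letter G) :
    u * lval l = lval (u * l.1, l.2.1, l.2.2) * u := by
  simp only [lval]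
  group

theorem lval_pair_comm (s v x : G) (ε : Bool) :
    lval (s, x, ε) * lval (v, x, !ε) = ⁅lval (s, x, ε), v * s⁻¹⁆ := by
  cases ε <;>
    simp only [lval, commutatorElement_def, Bool.not_true, Bool.not_false,
      cond_true, cond_false] <;> group

theorem core_lemma (n : ℕ) : ∀ L : List (Letter G), L.length ≤ n →
    (∀ x : G, cntL x L = 0) → ∃ m ≤ L.length, IsProdOfCommutators (prodOf L) m := by
  induction n with
  | zero =>
    intro L hL _
    have : L = [] := List.length_eq_zero_iff.mp (Nat.le_zero.mp hL)
    subst this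
    exact ⟨0, le_rfl, by simpa using isProd_one⟩
  | succ n ih =>
    intro L hL hcnt
    match L with
    | [] => exact ⟨0, le_rfl, by simpa using isProd_one⟩
    | (s, x, ε) :: L₁ =>
      have hcx : cnt x (s, x, ε) = cond ε 1 (-1) := by simp [cnt]
      have hx : cntL x L₁ = - (cond ε 1 (-1)) := by
        have := hcnt x
        simp only [cntL_cons, hcx] at this
        omega
      obtain ⟨t, P, Q, rfl⟩ := exists_opposite hx
      have hprod : prodOf ((s, x, ε) :: (P ++ (t, x, !ε) :: Q)) =
          ⁅lval (s, x, ε), (prodOf P * t) * s⁻¹⁆ * prodOf (P ++ Q) := by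
        simp only [prodOf_cons, prodOf_append]
        calc lval (s, x, ε) * (prodOf P * (lval (t, x, !ε) * prodOf Q))
            = lval (s, x, ε) * ((prodOf P * lval (t, x, !ε)) * prodOf Q) := by group
          _ = lval (s, x, ε) * ((lval (prodOf P * t, x, !ε) * prodOf P) * prodOf Q) := by
              rw [mul_lval (prodOf P) (t, x, !ε)]
          _ = (lval (s, x, ε) * lval (prodOf P * t, x, !ε)) * (prodOf P * prodOf Q) := by group
          _ = ⁅lval (s, x, ε), (prodOf P * t) * s⁻¹⁆ * (prodOf P * prodOf Q) := by
              rw [lval_pair_comm]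
      have hcnt' : ∀ z : G, cntL z (P ++ Q) = 0 := by
        intro z
        have h1 := hcnt z
        simp only [cntL_cons, cntL_append] at h1 ⊢
        have h2 : cnt z (s, x, ε) + cnt z (t, x, !ε) = 0 := by
          by_cases hb : x = z <;> cases ε <;> simp [cnt, hb]
        omega
      have hlen : (P ++ Q).length ≤ n := by
        simp only [List.length_cons, List.length_append] at hL ⊢
        omega
      obtain ⟨m, hm, hprodm⟩ := ih (P ++ Q) hlen hcnt'
      refine ⟨m + 1, ?_, ?_⟩
      · simp only [List.length_append] at hm
        simp only [List.length_cons, List.length_append]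
        omega
      · rw [hprod]
        exact isProd_cons (lval (s, x, ε)) ((prodOf P * t) * s⁻¹) hprodm

end SclAux
namespace SclAux
open scoped Classical
variable {G : Type*} [Group G]

noncomputable def Aint : G × G → G → ℤ := fun i z =>
  (if i.1 * i.2 = z then 1 else 0) - (if i.1 = z then 1 else 0) - (if i.2 = z then 1 else 0)

def triList (a b : G) : List (Letter G) := [(1, a*b, true), (b⁻¹, a, false), (1, b, false)]

def triList' (a b : G) : List (Letter G) := [(1, b, true), (b⁻¹, a, true), (1, a*b, false)]

theorem prodOf_triList (a b : G) : prodOf (triList a b) = 1 := by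
  simp only [triList, prodOf, List.map_cons, List.map_nil, List.prod_cons, List.prod_nil, lval,
    cond_true, cond_false]
  group

theorem prodOf_triList' (a b : G) : prodOf (triList' a b) = 1 := by
  simp only [triList', prodOf, List.map_cons, List.map_nil, List.prod_cons, List.prod_nil, lval,
    cond_true, cond_false]
  group

theorem cntL_triList (a b z : G) : cntL z (triList a b) = Aint (a, b) z := by
  simp only [triList, cntL, List.map_cons, List.map_nil, List.sum_cons, List.sum_nil, cnt, Aint,
    cond_true, cond_false]
  split_ifs <;> ring

theorem cntL_triList' (a b z : G) : cntL z (triList' a b) = - Aint (a, b) z := by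
  simp only [triList', cntL, List.map_cons, List.map_nil, List.sum_cons, List.sum_nil, cnt, Aint,
    cond_true, cond_false]
  split_ifs <;> ring

@[simp] theorem length_triList (a b : G) : (triList a b).length = 3 := rfl
@[simp] theorem length_triList' (a b : G) : (triList' a b).length = 3 := rfl

theorem prodOf_flatten_replicate {l : List (Letter G)} (hl : prodOf l = 1) (n : ℕ) :
    prodOf (List.flatten (List.replicate n l)) = 1 := by
  induction n with
  | zero => simp
  | succ k ih => simp [List.replicate_succ, hl, ih]

theorem cntL_flatten_replicate (z : G) (l : List (Letter G)) (n : ℕ) :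
    cntL z (List.flatten (List.replicate n l)) = n * cntL z l := by
  induction n with
  | zero => simp
  | succ k ih =>
    simp only [List.replicate_succ, List.flatten_cons, cntL_append, ih]
    push_cast
    ring

theorem length_flatten_replicate (l : List (Letter G)) (n : ℕ) :
    (List.flatten (List.replicate n l)).length = n * l.length := by
  induction n with
  | zero => simp
  | succ k ih =>
    simp only [List.replicate_succ, List.flatten_cons, List.length_append, ih]
    ring

noncomputable def blockFor (i : G × G) (k : ℤ) : List (Letter G) :=
  if 0 ≤ k then List.flatten (List.replicate k.toNat (triList i.1 i.2))
  else List.flatten (List.replicate (-k).toNat (triList' i.1 i.2))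

theorem prodOf_blockFor (i : G × G) (k : ℤ) : prodOf (blockFor i k) = 1 := by
  unfold blockFor
  split_ifs
  · exact prodOf_flatten_replicate (prodOf_triList i.1 i.2) _
  · exact prodOf_flatten_replicate (prodOf_triList' i.1 i.2) _

theorem cntL_blockFor (z : G) (i : G × G) (k : ℤ) :
    cntL z (blockFor i k) = k * Aint i z := by
  unfold blockFor
  split_ifs with h
  · rw [cntL_flatten_replicate, cntL_triList]
    congr 1
    omega
  · rw [cntL_flatten_replicate, cntL_triList']
    have : ((-k).toNat : ℤ) = -k := by omega
    rw [show ((-k).toNat : ℤ) * (-Aint (i.1, i.2) z) = -((-k).toNat : ℤ) * Aint (i.1, i.2) z by ring,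
      this]
    simp

theorem length_blockFor (i : G × G) (k : ℤ) :
    (blockFor i k).length = 3 * k.natAbs := by
  unfold blockFor
  split_ifs with h <;> rw [length_flatten_replicate] <;> simp <;> omega

theorem build_list (s : Finset (G × G)) (f : G × G → ℤ) :
    ∃ L : List (Letter G), prodOf L = 1 ∧ (∀ z, cntL z L = ∑ i ∈ s, f i * Aint i z) ∧
      L.length = ∑ i ∈ s, 3 * (f i).natAbs := by
  induction s using Finset.induction_on with
  | empty => exact ⟨[], by simp⟩
  | insert _ _ hi ih =>
    rename_i i s
    obtain ⟨L, hp, hc, hl⟩ := ih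
    refine ⟨blockFor i (f i) ++ L, ?_, ?_, ?_⟩
    · simp [prodOf_blockFor, hp]
    · intro z
      rw [cntL_append, cntL_blockFor, hc z, Finset.sum_insert hi]
    · rw [List.length_append, length_blockFor, hl, Finset.sum_insert hi]

theorem cntL_replicate_winv (z w : G) (N : ℕ) :
    cntL z (List.replicate N ((1 : G), w, false)) = -(N * (if w = z then 1 else 0)) := by
  induction N with
  | zero => simp
  | succ k ihk =>
    rw [List.replicate_succ, cntL_cons, ihk]
    have hc : cnt z ((1 : G), w, false) = -(if w = z then 1 else 0) := by
      simp only [cnt, cond_false]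
      split_ifs <;> ring
    rw [hc]
    push_cast
    ring

theorem prodOf_replicate_winv (w : G) (N : ℕ) :
    prodOf (List.replicate N ((1 : G), w, false)) = w⁻¹ ^ N := by
  induction N with
  | zero => simp
  | succ k ihk =>
    rw [List.replicate_succ, prodOf_cons, ihk, pow_succ]
    have hv : lval ((1 : G), w, false) = w⁻¹ := by simp [lval]
    rw [hv]
    group

theorem cl_bound_of_int_filling (w : G) (N : ℕ) (s : Finset (G × G)) (f : G × G → ℤ)
    (heq : ∀ z : G, (∑ i ∈ s, f i * Aint i z) = N * (if w = z then 1 else 0)) :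
    ∃ m ≤ (∑ i ∈ s, 3 * (f i).natAbs) + N, IsProdOfCommutators (w ^ N) m := by
  obtain ⟨L₀, hp, hc, hl⟩ := build_list s f
  set L := L₀ ++ List.replicate N ((1 : G), w, false) with hLdef
  have hcnt : ∀ z : G, cntL z L = 0 := by
    intro z
    rw [hLdef, cntL_append, hc z, heq z, cntL_replicate_winv]
    ring
  have hprod : prodOf L = (w ^ N)⁻¹ := by
    rw [hLdef, prodOf_append, hp, one_mul, prodOf_replicate_winv, inv_pow]
  obtain ⟨m, hm, hprodm⟩ := core_lemma L.length L le_rfl hcnt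
  refine ⟨m, ?_, ?_⟩
  · calc m ≤ L.length := hm
      _ = (∑ i ∈ s, 3 * (f i).natAbs) + N := by
        rw [hLdef, List.length_append, hl, List.length_replicate]
  · rw [hprod] at hprodm
    simpa using isProd_inv hprodm

end SclAux
namespace SclAux

theorem rat_approx {ι κ : Type*} (s : Finset ι) :
    ∀ (A : ι → κ → ℚ) (b : κ → ℚ) (c : ι → ℝ),
    (∀ k, ∑ i ∈ s, c i * (A i k : ℝ) = (b k : ℝ)) →
    ∀ ε : ℝ, 0 < ε →
    ∃ c' : ι → ℚ, (∀ k, ∑ i ∈ s, c' i * A i k = b k) ∧ ∀ i ∈ s, |(c' i : ℝ) - c i| ≤ ε := by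
  classical
  induction s using Finset.induction_on with
  | empty =>
    intro A b c hc ε hε
    refine ⟨fun _ => 0, fun k => ?_, by simp⟩
    have h1 := hc k
    simp only [Finset.sum_empty] at h1 ⊢
    exact_mod_cast h1
  | insert _ _ hi ih =>
    rename_i i₀ s
    intro A b c hc ε hε
    have hne : ∀ j ∈ s, j ≠ i₀ := fun j hj hji => hi (by rwa [hji] at hj)
    by_cases h0 : ∀ k, A i₀ k = 0
    · have hc' : ∀ k, ∑ i ∈ s, c i * (A i k : ℝ) = (b k : ℝ) := by
        intro k
        have h1 := hc k
        rw [Finset.sum_insert hi, h0 k] at h1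
        simpa using h1
      obtain ⟨c', hce, hcb⟩ := ih A b c hc' ε hε
      obtain ⟨q₀, hq₀⟩ := exists_rat_near (c i₀) hε
      refine ⟨Function.update c' i₀ q₀, fun k => ?_, fun j hjm => ?_⟩
      · rw [Finset.sum_insert hi, h0 k, Function.update_self, mul_zero, zero_add,
          Finset.sum_congr rfl (fun j hj => by rw [Function.update_of_ne (hne j hj)])]
        exact hce k
      · rcases Finset.mem_insert.mp hjm with rfl | hin
        · rw [Function.update_self]
          rw [abs_sub_comm] at hq₀
          exact hq₀.le
        · rw [Function.update_of_ne (hne j hin)]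
          exact hcb j hin
    · push_neg at h0
      obtain ⟨k₀, hk₀⟩ := h0
      set A' : ι → κ → ℚ := fun i k => A i k - (A i k₀ / A i₀ k₀) * A i₀ k with hA'
      set b' : κ → ℚ := fun k => b k - (b k₀ / A i₀ k₀) * A i₀ k with hb'
      have hk₀R : ((A i₀ k₀ : ℚ) : ℝ) ≠ 0 := by exact_mod_cast hk₀
      have hred : ∀ k, ∑ i ∈ s, c i * (A' i k : ℝ) = (b' k : ℝ) := by
        intro k
        have h1 := hc k
        have h2 := hc k₀
        rw [Finset.sum_insert hi] at h1 h2
        have e1 : ∑ i ∈ s, c i * (A i k : ℝ) = (b k : ℝ) - c i₀ * (A i₀ k : ℝ) := by linarith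
        have e2 : ∑ i ∈ s, c i * (A i k₀ : ℝ) = (b k₀ : ℝ) - c i₀ * (A i₀ k₀ : ℝ) := by linarith
        have expand : ∀ i, (c i) * (A' i k : ℝ) =
            c i * (A i k : ℝ) - (c i * (A i k₀ : ℝ)) * ((A i₀ k : ℝ) / (A i₀ k₀ : ℝ)) := by
          intro i
          rw [hA']
          push_cast
          field_simp
        rw [Finset.sum_congr rfl (fun i _ => expand i), Finset.sum_sub_distrib,
          ← Finset.sum_mul, e1, e2, hb']
        push_cast
        field_simp
        ring
      set D : ℝ := ∑ i ∈ s, |(A i k₀ : ℝ)| with hD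
      have hDnn : 0 ≤ D := Finset.sum_nonneg (fun i _ => abs_nonneg _)
      set ε' : ℝ := min ε (ε * |(A i₀ k₀ : ℝ)| / (1 + D)) with hε'
      have hε'pos : 0 < ε' := by
        apply lt_min hε
        apply div_pos
        · exact mul_pos hε (abs_pos.mpr hk₀R)
        · linarith
      obtain ⟨c', hce, hcb⟩ := ih A' b' c hred ε' hε'pos
      set q₀ : ℚ := (b k₀ - ∑ i ∈ s, c' i * A i k₀) / A i₀ k₀ with hq₀def
      refine ⟨Function.update c' i₀ q₀, fun k => ?_, fun j hjm => ?_⟩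
      · rw [Finset.sum_insert hi, Function.update_self,
          Finset.sum_congr rfl (fun j hj => by rw [Function.update_of_ne (hne j hj)])]
        have hrk := hce k
        have expandq : ∀ i, (c' i) * A' i k =
            c' i * A i k - (c' i * A i k₀) * (A i₀ k / A i₀ k₀) := by
          intro i
          rw [hA']
          field_simp
        rw [Finset.sum_congr rfl (fun i _ => expandq i), Finset.sum_sub_distrib,
          ← Finset.sum_mul, hb'] at hrk
        have hstep : ∑ i ∈ s, c' i * A i k =
            b k - (b k₀ / A i₀ k₀) * A i₀ k + (∑ i ∈ s, c' i * A i k₀) * (A i₀ k / A i₀ k₀) := by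
          linarith
        rw [hstep, hq₀def]
        field_simp
        ring
      · rcases Finset.mem_insert.mp hjm with rfl | hin
        · rw [Function.update_self]
          have h2 := hc k₀
          rw [Finset.sum_insert hi] at h2
          have hci : c j = ((b k₀ : ℝ) - ∑ i ∈ s, c i * (A i k₀ : ℝ)) / (A j k₀ : ℝ) := by
            field_simp
            linarith
          have hqR : ((q₀ : ℚ) : ℝ) =
              ((b k₀ : ℝ) - ∑ i ∈ s, (c' i : ℝ) * (A i k₀ : ℝ)) / (A j k₀ : ℝ) := by
            rw [hq₀def]
            push_cast
            ring
          have hnum : ∑ i ∈ s, (c i - (c' i : ℝ)) * (A i k₀ : ℝ) =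
              (∑ i ∈ s, c i * (A i k₀ : ℝ)) - ∑ i ∈ s, (c' i : ℝ) * (A i k₀ : ℝ) := by
            rw [← Finset.sum_sub_distrib]
            exact Finset.sum_congr rfl (fun i _ => by ring)
          have hdiff : ((q₀ : ℚ) : ℝ) - c j =
              (∑ i ∈ s, (c i - (c' i : ℝ)) * (A i k₀ : ℝ)) / (A j k₀ : ℝ) := by
            rw [hqR, hci, div_sub_div_same, hnum]
            ring_nf
          rw [hdiff, abs_div, div_le_iff₀ (abs_pos.mpr hk₀R)]
          have hsumb : |∑ i ∈ s, (c i - (c' i : ℝ)) * (A i k₀ : ℝ)| ≤ ε' * D := by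
            calc |∑ i ∈ s, (c i - (c' i : ℝ)) * (A i k₀ : ℝ)|
                ≤ ∑ i ∈ s, |(c i - (c' i : ℝ)) * (A i k₀ : ℝ)| := Finset.abs_sum_le_sum_abs _ _
              _ ≤ ∑ i ∈ s, ε' * |(A i k₀ : ℝ)| := by
                  apply Finset.sum_le_sum
                  intro i hin
                  rw [abs_mul]
                  apply mul_le_mul_of_nonneg_right _ (abs_nonneg _)
                  rw [abs_sub_comm]
                  exact hcb i hin
              _ = ε' * D := by rw [hD, Finset.mul_sum]
          have hDb : ε' * D ≤ ε * |(A j k₀ : ℝ)| := by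
            have h1 : ε' ≤ ε * |(A j k₀ : ℝ)| / (1 + D) := min_le_right _ _
            have h3 : ε' * D ≤ (ε * |(A j k₀ : ℝ)| / (1 + D)) * D :=
              mul_le_mul_of_nonneg_right h1 hDnn
            calc ε' * D ≤ (ε * |(A j k₀ : ℝ)| / (1 + D)) * D := h3
              _ ≤ ε * |(A j k₀ : ℝ)| := by
                  rw [div_mul_eq_mul_div, div_le_iff₀ (by linarith : (0:ℝ) < 1 + D)]
                  have h4 : 0 ≤ ε * |(A j k₀ : ℝ)| := by positivity
                  nlinarith
          exact hsumb.trans hDb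
        · rw [Function.update_of_ne (hne j hin)]
          exact (hcb j hin).trans (min_le_left _ _)

end SclAux
namespace SclAux
open Finsupp
variable {G : Type*} [Group G]

noncomputable def tri (i : G × G) : G →₀ ℝ :=
  single (i.1 * i.2) 1 - single i.1 1 - single i.2 1

theorem tri_apply (i : G × G) (z : G) : tri i z = ((Aint i z : ℤ) : ℝ) := by
  classical
  simp only [tri, Aint, Finsupp.sub_apply, Finsupp.single_apply]
  push_cast
  ring

noncomputable def Wsub (G : Type*) [Group G] : Submodule ℝ (G →₀ ℝ) :=
  Submodule.span ℝ (Set.range (tri : G × G → G →₀ ℝ))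

theorem tri_mem_Wsub (i : G × G) : tri i ∈ Wsub G :=
  Submodule.subset_span ⟨i, rfl⟩

theorem pair_mem_Wsub (u : G) : single u (1:ℝ) + single u⁻¹ (1:ℝ) ∈ Wsub G := by
  have h1 : tri (u, u⁻¹) ∈ Wsub G := tri_mem_Wsub _
  have h0 : single (1 : G) (1:ℝ) ∈ Wsub G := by
    have h2 : tri ((1 : G), (1 : G)) ∈ Wsub G := tri_mem_Wsub _
    have h3 : tri ((1 : G), (1 : G)) = - single (1 : G) (1:ℝ) := by
      simp only [tri, one_mul]
      abel
    rw [h3] at h2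
    simpa using (Wsub G).neg_mem h2
  have h4 : single u (1:ℝ) + single u⁻¹ (1:ℝ) = single (1 : G) (1:ℝ) - tri (u, u⁻¹) := by
    simp only [tri, mul_inv_cancel]
    abel
  rw [h4]
  exact (Wsub G).sub_mem h0 h1

theorem single_comm_mem_Wsub (a b : G) : single ⁅a, b⁆ (1:ℝ) ∈ Wsub G := by
  have key : single ⁅a, b⁆ (1:ℝ) =
      tri (a * b, (b * a)⁻¹) + tri (a, b) + (single (b*a) (1:ℝ) + single (b*a)⁻¹ (1:ℝ))
        - tri (b, a) := by
    have hcomm : ⁅a, b⁆ = (a * b) * (b * a)⁻¹ := by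
      rw [commutatorElement_def]
      group
    rw [hcomm]
    simp only [tri]
    abel
  rw [key]
  exact Submodule.sub_mem _
    (Submodule.add_mem _ (Submodule.add_mem _ (tri_mem_Wsub _) (tri_mem_Wsub _))
      (pair_mem_Wsub (b*a)))
    (tri_mem_Wsub _)

theorem single_mem_Wsub {h : G} (hh : h ∈ commutator G) : single h (1:ℝ) ∈ Wsub G := by
  rw [commutator_eq_closure] at hh
  induction hh using Subgroup.closure_induction with
  | mem x hx =>
    obtain ⟨a, b, rfl⟩ := hx
    exact single_comm_mem_Wsub a b
  | one =>
    have h2 : tri ((1 : G), (1 : G)) = - single (1 : G) (1:ℝ) := by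
      simp only [tri, one_mul]
      abel
    have h3 := tri_mem_Wsub ((1 : G), (1 : G))
    rw [h2] at h3
    simpa using (Wsub G).neg_mem h3
  | mul x y _ _ hx hy =>
    have h1 : single (x * y) (1:ℝ) = tri (x, y) + single x (1:ℝ) + single y (1:ℝ) := by
      simp only [tri]; abel
    rw [h1]
    exact Submodule.add_mem _ (Submodule.add_mem _ (tri_mem_Wsub _) hx) hy
  | inv x _ hx =>
    have h1 : single x⁻¹ (1:ℝ) = (single x (1:ℝ) + single x⁻¹ (1:ℝ)) - single x (1:ℝ) := by
      abel
    rw [h1]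
    exact Submodule.sub_mem _ (pair_mem_Wsub x) hx

/-- cost set of decompositions into triangles. -/
def SPr (y : G →₀ ℝ) : Set ℝ :=
  {r | ∃ (t : Finset (G × G)) (f : (G × G) → ℝ),
    (∑ i ∈ t, f i • tri i) = y ∧ r = ∑ i ∈ t, |f i|}

theorem SPr_nonneg {y : G →₀ ℝ} {r : ℝ} (hr : r ∈ SPr y) : 0 ≤ r := by
  obtain ⟨t, f, _, rfl⟩ := hr
  exact Finset.sum_nonneg (fun i _ => abs_nonneg _)

theorem SPr_nonempty_of_mem {y : G →₀ ℝ} (hy : y ∈ Wsub G) : (SPr y).Nonempty := by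
  rw [Wsub, Finsupp.mem_span_range_iff_exists_finsupp] at hy
  obtain ⟨c, hc⟩ := hy
  refine ⟨∑ i ∈ c.support, |c i|, c.support, c, ?_, rfl⟩
  rw [← hc]
  rfl

theorem SPr_bddBelow (y : G →₀ ℝ) : BddBelow (SPr y) :=
  ⟨0, fun _ hr => SPr_nonneg hr⟩

theorem SPr_add {y₁ y₂ : G →₀ ℝ} {r₁ r₂ : ℝ} (h₁ : r₁ ∈ SPr y₁) (h₂ : r₂ ∈ SPr y₂) :
    ∃ r ∈ SPr (y₁ + y₂), r ≤ r₁ + r₂ := by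
  classical
  obtain ⟨t₁, f₁, hs₁, rfl⟩ := h₁
  obtain ⟨t₂, f₂, hs₂, rfl⟩ := h₂
  set f : (G × G) → ℝ := fun i =>
    (if i ∈ t₁ then f₁ i else 0) + (if i ∈ t₂ then f₂ i else 0) with hf
  refine ⟨∑ i ∈ t₁ ∪ t₂, |f i|, ⟨t₁ ∪ t₂, f, ?_, rfl⟩, ?_⟩
  · have e1 : ∑ i ∈ t₁ ∪ t₂, f i • tri i =
        (∑ i ∈ t₁ ∪ t₂, (if i ∈ t₁ then f₁ i else 0) • tri i) +
        (∑ i ∈ t₁ ∪ t₂, (if i ∈ t₂ then f₂ i else 0) • tri i) := by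
      rw [← Finset.sum_add_distrib]
      apply Finset.sum_congr rfl
      intro i _
      rw [hf, add_smul]
    have e2 : ∑ i ∈ t₁ ∪ t₂, (if i ∈ t₁ then f₁ i else 0) • tri i = ∑ i ∈ t₁, f₁ i • tri i := by
      calc ∑ i ∈ t₁ ∪ t₂, (if i ∈ t₁ then f₁ i else 0) • tri i
          = ∑ i ∈ t₁ ∪ t₂, (if i ∈ t₁ then f₁ i • tri i else 0) :=
            Finset.sum_congr rfl (fun i _ => by split_ifs <;> simp)
        _ = ∑ i ∈ (t₁ ∪ t₂) ∩ t₁, f₁ i • tri i := Finset.sum_ite_mem _ _ _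
        _ = ∑ i ∈ t₁, f₁ i • tri i := by rw [Finset.union_inter_cancel_left]
    have e3 : ∑ i ∈ t₁ ∪ t₂, (if i ∈ t₂ then f₂ i else 0) • tri i = ∑ i ∈ t₂, f₂ i • tri i := by
      calc ∑ i ∈ t₁ ∪ t₂, (if i ∈ t₂ then f₂ i else 0) • tri i
          = ∑ i ∈ t₁ ∪ t₂, (if i ∈ t₂ then f₂ i • tri i else 0) :=
            Finset.sum_congr rfl (fun i _ => by split_ifs <;> simp)
        _ = ∑ i ∈ (t₁ ∪ t₂) ∩ t₂, f₂ i • tri i := Finset.sum_ite_mem _ _ _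
        _ = ∑ i ∈ t₂, f₂ i • tri i := by rw [Finset.union_inter_cancel_right]
    rw [e1, e2, e3, hs₁, hs₂]
  · have e4 : ∀ i ∈ t₁ ∪ t₂, |f i| ≤
        (if i ∈ t₁ then |f₁ i| else 0) + (if i ∈ t₂ then |f₂ i| else 0) := by
      intro i _
      rw [hf]
      refine (abs_add_le _ _).trans ?_
      apply add_le_add <;> split_ifs <;> simp
    calc ∑ i ∈ t₁ ∪ t₂, |f i|
        ≤ ∑ i ∈ t₁ ∪ t₂, ((if i ∈ t₁ then |f₁ i| else 0) + (if i ∈ t₂ then |f₂ i| else 0)) :=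
          Finset.sum_le_sum e4
      _ = (∑ i ∈ t₁, |f₁ i|) + ∑ i ∈ t₂, |f₂ i| := by
          rw [Finset.sum_add_distrib, Finset.sum_ite_mem, Finset.union_inter_cancel_left,
            Finset.sum_ite_mem, Finset.union_inter_cancel_right]

theorem SPr_smul {y : G →₀ ℝ} {r : ℝ} (c : ℝ) (h : r ∈ SPr y) : |c| * r ∈ SPr (c • y) := by
  obtain ⟨t, f, hs, rfl⟩ := h
  refine ⟨t, fun i => c * f i, ?_, ?_⟩
  · rw [← hs, Finset.smul_sum]
    apply Finset.sum_congr rfl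
    intro i _
    rw [smul_smul]
  · rw [Finset.mul_sum]
    apply Finset.sum_congr rfl
    intro i _
    rw [abs_mul]

theorem SPr_tri_le_one (i : G × G) : ∃ r ∈ SPr (tri i : G →₀ ℝ), r ≤ 1 := by
  refine ⟨∑ j ∈ {i}, |(fun _ => (1:ℝ)) j|, ⟨{i}, fun _ => 1, by simp, rfl⟩, by simp⟩

theorem SPr_neg_tri_le_one (i : G × G) : ∃ r ∈ SPr (-tri i : G →₀ ℝ), r ≤ 1 := by
  refine ⟨∑ j ∈ {i}, |(fun _ => (-1:ℝ)) j|, ⟨{i}, fun _ => -1, by simp, rfl⟩, by simp⟩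

theorem exists_phi0 (w : G) (hw : single w (1:ℝ) ∈ Wsub G)
    (hlow : ∀ r ∈ SPr (single w (1:ℝ)), (5:ℝ) ≤ r) :
    ∃ φ₀ : G → ℝ, (∀ a b : G, |φ₀ (a * b) - φ₀ a - φ₀ b| ≤ 1) ∧ (5:ℝ) ≤ φ₀ w := by
  classical
  -- projection onto Wsub
  obtain ⟨sec, hsec⟩ := LinearMap.exists_rightInverse_of_surjective
    (Wsub G).mkQ (Submodule.range_mkQ _)
  set P : (G →₀ ℝ) →ₗ[ℝ] (G →₀ ℝ) := LinearMap.id - sec ∘ₗ (Wsub G).mkQ with hP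
  have hPmem : ∀ x, P x ∈ Wsub G := by
    intro x
    have h2 : (Wsub G).mkQ (P x) = 0 := by
      have h1 := LinearMap.congr_fun hsec ((Wsub G).mkQ x)
      simp only [LinearMap.comp_apply, LinearMap.id_apply] at h1
      simp only [hP, LinearMap.sub_apply, LinearMap.id_apply, LinearMap.comp_apply, map_sub]
      rw [h1, sub_self]
    have h3 : P x ∈ LinearMap.ker (Wsub G).mkQ := LinearMap.mem_ker.mpr h2
    rwa [Submodule.ker_mkQ] at h3
  have hPid : ∀ x ∈ Wsub G, P x = x := by
    intro x hx
    have h1 : (Wsub G).mkQ x = 0 := by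
      rwa [← LinearMap.mem_ker, Submodule.ker_mkQ]
    simp [hP, h1]
  -- the sublinear functional
  set p : (G →₀ ℝ) → ℝ := fun x => sInf (SPr (P x)) with hp
  have hp_nonneg : ∀ x, 0 ≤ p x :=
    fun x => le_csInf (SPr_nonempty_of_mem (hPmem x)) (fun r hr => SPr_nonneg hr)
  have hp_le : ∀ x (r : ℝ), r ∈ SPr (P x) → p x ≤ r :=
    fun x r hr => csInf_le (SPr_bddBelow _) hr
  have N_add : ∀ x y, p (x + y) ≤ p x + p y := by
    intro x y
    simp only [hp]
    have hne : ∀ z, (SPr (P z)).Nonempty := fun z => SPr_nonempty_of_mem (hPmem z)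
    apply le_of_forall_pos_le_add
    intro ε hε
    obtain ⟨r₁, hr₁, hr₁'⟩ := Real.lt_sInf_add_pos (hne x) (half_pos hε)
    obtain ⟨r₂, hr₂, hr₂'⟩ := Real.lt_sInf_add_pos (hne y) (half_pos hε)
    have hPxy : P (x + y) = P x + P y := map_add _ _ _
    obtain ⟨r, hr, hrle⟩ := SPr_add hr₁ hr₂
    rw [← hPxy] at hr
    calc sInf (SPr (P (x+y))) ≤ r := csInf_le (SPr_bddBelow _) hr
      _ ≤ r₁ + r₂ := hrle
      _ ≤ (sInf (SPr (P x)) + ε/2) + (sInf (SPr (P y)) + ε/2) := by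
          have := hr₁'.le
          have := hr₂'.le
          linarith
      _ = sInf (SPr (P x)) + sInf (SPr (P y)) + ε := by ring
  have N_hom : ∀ c : ℝ, 0 < c → ∀ x, p (c • x) = c * p x := by
    intro c hc x
    have hPc : P (c • x) = c • P x := map_smul _ _ _
    apply le_antisymm
    · simp only [hp]
      rw [hPc]
      -- sInf SPr (c • Px) ≤ c * sInf SPr (Px)
      have : ∀ r ∈ SPr (P x), sInf (SPr (c • P x)) ≤ c * r := by
        intro r hr
        have h1 := SPr_smul c hr
        rw [abs_of_pos hc] at h1
        exact csInf_le (SPr_bddBelow _) h1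
      have h2 : ∀ r ∈ SPr (P x), sInf (SPr (c • P x)) / c ≤ r := by
        intro r hr
        rw [div_le_iff₀ hc, mul_comm]
        exact this r hr
      have h3 : sInf (SPr (c • P x)) / c ≤ sInf (SPr (P x)) :=
        le_csInf (SPr_nonempty_of_mem (hPmem x)) h2
      calc sInf (SPr (c • P x)) = (sInf (SPr (c • P x)) / c) * c := by field_simp
        _ ≤ sInf (SPr (P x)) * c := mul_le_mul_of_nonneg_right h3 hc.le
        _ = c * sInf (SPr (P x)) := mul_comm _ _
    · -- c * sInf SPr(Px) ≤ sInf SPr (c • Px)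
      simp only [hp]
      rw [hPc]
      have h4 : ∀ r ∈ SPr (c • P x), c * sInf (SPr (P x)) ≤ r := by
        intro r hr
        have h5 := SPr_smul c⁻¹ hr
        rw [smul_smul, inv_mul_cancel₀ hc.ne', one_smul] at h5
        have h6 : sInf (SPr (P x)) ≤ |c⁻¹| * r := csInf_le (SPr_bddBelow _) h5
        rw [abs_of_pos (inv_pos.mpr hc)] at h6
        calc c * sInf (SPr (P x)) ≤ c * (c⁻¹ * r) :=
            mul_le_mul_of_nonneg_left h6 hc.le
          _ = r := by field_simp
      exact le_csInf (SPr_nonempty_of_mem (by rw [← hPc]; exact hPmem _)) h4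
  -- Hahn-Banach
  have hx0 : single w (1:ℝ) ≠ 0 := by
    intro hcon
    have := DFunLike.congr_fun hcon w
    simp at this
  set x₀ : G →₀ ℝ := single w (1:ℝ) with hx₀
  have hpx₀ : 5 ≤ p x₀ := by
    simp only [hp]
    rw [hPid x₀ hw]
    exact le_csInf (SPr_nonempty_of_mem hw) hlow
  set f₀ : (G →₀ ℝ) →ₗ.[ℝ] ℝ := LinearPMap.mkSpanSingleton x₀ (p x₀) hx0 with hf₀
  have hfle : ∀ y : f₀.domain, f₀ y ≤ p y := by
    rintro ⟨y, hy⟩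
    have hy' : y ∈ Submodule.span ℝ {x₀} := hy
    obtain ⟨t, rfl⟩ := Submodule.mem_span_singleton.mp hy'
    have happ : f₀ ⟨t • x₀, hy⟩ = t • (p x₀) := by
      exact LinearPMap.mkSpanSingleton'_apply x₀ (p x₀) _ t _
    rw [happ]
    rcases lt_trichotomy t 0 with htneg | htz | htpos
    · have h1 : t • p x₀ ≤ 0 := by
        rw [smul_eq_mul]
        exact mul_nonpos_of_nonpos_of_nonneg htneg.le (hp_nonneg x₀)
      exact h1.trans (hp_nonneg _)
    · subst htz
      simpa using hp_nonneg (0 : G →₀ ℝ)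
    · rw [N_hom t htpos, smul_eq_mul]
  obtain ⟨F, hFf, hFle⟩ := exists_extension_of_le_sublinear f₀ p N_hom N_add hfle
  refine ⟨fun h => F (single h 1), fun a b => ?_, ?_⟩
  · have hsub : single (a*b) (1:ℝ) - single a 1 - single b 1 = tri (a, b) := rfl
    have hFtri : F (single (a*b) (1:ℝ)) - F (single a 1) - F (single b 1) = F (tri (a, b)) := by
      rw [← map_sub, ← map_sub, hsub]
    rw [hFtri]
    rw [abs_le]
    constructor
    · have h1 : F (-(tri (a, b))) ≤ p (-(tri (a, b))) := hFle _
      have h2 : p (-(tri (a,b))) ≤ 1 := by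
        obtain ⟨r, hr, hrle⟩ := SPr_neg_tri_le_one (a, b)
        have h3 : -tri (a,b) ∈ Wsub G := (Wsub G).neg_mem (tri_mem_Wsub _)
        calc p (-(tri (a,b))) ≤ r := by
              simp only [hp]
              rw [hPid _ h3]
              exact csInf_le (SPr_bddBelow _) hr
          _ ≤ 1 := hrle
      have h4 : -F (tri (a,b)) ≤ 1 := by
        rw [← map_neg]
        exact h1.trans h2
      linarith
    · have h1 : F (tri (a, b)) ≤ p (tri (a, b)) := hFle _
      have h2 : p (tri (a,b)) ≤ 1 := by
        obtain ⟨r, hr, hrle⟩ := SPr_tri_le_one (a, b)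
        calc p (tri (a,b)) ≤ r := by
              simp only [hp]
              rw [hPid _ (tri_mem_Wsub _)]
              exact csInf_le (SPr_bddBelow _) hr
          _ ≤ 1 := hrle
      linarith
  · have hmem : x₀ ∈ f₀.domain := by
      rw [hf₀]
      exact Submodule.mem_span_singleton_self x₀
    have h1 : F x₀ = f₀ ⟨x₀, hmem⟩ := hFf ⟨x₀, hmem⟩
    have h2 : f₀ ⟨x₀, hmem⟩ = p x₀ := by
      exact LinearPMap.mkSpanSingleton'_apply_self x₀ (p x₀) _ _
    calc (5:ℝ) ≤ p x₀ := hpx₀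
      _ = f₀ ⟨x₀, hmem⟩ := h2.symm
      _ = F x₀ := h1.symm
      _ = F (single w 1) := rfl

end SclAux
namespace SclAux
open Filter Topology
variable {G : Type*} [Group G]

theorem homogenize {φ₀ : G → ℝ} (hd : ∀ a b : G, |φ₀ (a * b) - φ₀ a - φ₀ b| ≤ 1) :
    ∃ φ : G → ℝ, IsQuasimorphism φ ∧ IsHomogeneous φ ∧ ∀ h : G, |φ h - φ₀ h| ≤ 1 := by
  have hone : |φ₀ 1| ≤ 1 := by
    have h1 := hd 1 1
    rw [one_mul] at h1
    have : |φ₀ 1 - φ₀ 1 - φ₀ 1| = |φ₀ 1| := by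
      rw [sub_sub, ← abs_neg]
      congr 1
      ring
    rwa [this] at h1
  set u : G → ℕ → ℝ := fun h n => φ₀ (h ^ n) + 1 with hu
  have hsub : ∀ h : G, Subadditive (u h) := by
    intro h m n
    have h1 := hd (h ^ m) (h ^ n)
    rw [← pow_add] at h1
    have h2 := abs_le.mp h1
    simp only [hu]
    linarith [h2.1, h2.2]
  have hLB : ∀ (h : G) (n : ℕ), 1 ≤ n → (n : ℝ) * φ₀ h - ((n : ℝ) - 1) ≤ φ₀ (h ^ n) := by
    intro h n hn
    induction n with
    | zero => omega
    | succ k ih =>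
      rcases Nat.eq_or_lt_of_le hn with heq | hlt
      · simp only [← heq]
        simp
      · have hk : 1 ≤ k := by omega
        have h1 := hd (h ^ k) h
        rw [← pow_succ] at h1
        have h2 := (abs_le.mp h1).1
        have h3 := ih hk
        push_cast
        linarith
  have hdivLB : ∀ (h : G) (n : ℕ), u h n / n ≥ min 0 (φ₀ h - 1) := by
    intro h n
    rcases Nat.eq_zero_or_pos n with rfl | hn
    · simp
    · have hnR : (0:ℝ) < n := by exact_mod_cast hn
      have h1 := hLB h n hn
      have h2 : (φ₀ h - 1) ≤ u h n / n := by
        rw [le_div_iff₀ hnR, hu]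
        have : (n:ℝ) - 1 ≥ 0 := by
          have : (1:ℝ) ≤ n := by exact_mod_cast hn
          linarith
        simp only []
        nlinarith
      exact le_trans (min_le_right _ _) h2
  have hbdd : ∀ h : G, BddBelow (Set.range fun n : ℕ => u h n / n) := by
    intro h
    refine ⟨min 0 (φ₀ h - 1), ?_⟩
    rintro r ⟨n, rfl⟩
    exact hdivLB h n
  set φ : G → ℝ := fun h => (hsub h).lim with hφ
  have hT : ∀ h : G, Tendsto (fun n : ℕ => u h n / n) atTop (𝓝 (φ h)) :=
    fun h => (hsub h).tendsto_lim (hbdd h)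
  -- φ is within 1 of φ₀
  have hclose : ∀ h : G, |φ h - φ₀ h| ≤ 1 := by
    intro h
    have hup : φ h ≤ φ₀ h + 1 := by
      have h1 := (hsub h).lim_le_div (hbdd h) (one_ne_zero)
      simp only [hu, pow_one, Nat.cast_one, div_one] at h1
      exact h1
    have hdown : φ₀ h - 1 ≤ φ h := by
      apply ge_of_tendsto (hT h)
      filter_upwards [eventually_ge_atTop 1] with n hn
      have hnR : (0:ℝ) < n := by exact_mod_cast hn
      rw [le_div_iff₀ hnR, hu]
      have h1 := hLB h n hn
      simp only []
      nlinarith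
    rw [abs_le]
    constructor <;> linarith
  -- φ 1 = 0
  have hφ1 : φ 1 = 0 := by
    have h1 : (fun n : ℕ => u 1 n / n) = fun n : ℕ => (φ₀ 1 + 1) / n := by
      funext n
      simp [hu]
    have h2 : Tendsto (fun n : ℕ => u 1 n / n) atTop (𝓝 0) := by
      rw [h1]
      exact tendsto_const_div_atTop_nhds_zero_nat _
    exact tendsto_nhds_unique (hT 1) h2
  -- φ (h ^ n) = n * φ h for n ≥ 1
  have hpow : ∀ (h : G) (n : ℕ), 1 ≤ n → φ (h ^ n) = n * φ h := by
    intro h n hn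
    have hfun : (fun m : ℕ => u (h ^ n) m / m) =
        fun m : ℕ => (n : ℝ) * (u h (n * m) / ((n * m : ℕ) : ℝ)) := by
      funext m
      rcases Nat.eq_zero_or_pos m with rfl | hm
      · simp
      · have hnm : ((n * m : ℕ) : ℝ) ≠ 0 := by
          have : 0 < n * m := Nat.mul_pos hn hm
          exact_mod_cast this.ne'
        have hmR : ((m:ℕ):ℝ) ≠ 0 := by
          exact_mod_cast hm.ne'
        have hnR : ((n:ℕ):ℝ) ≠ 0 := by
          have : 0 < n := hn
          exact_mod_cast this.ne'
        simp only [hu, ← pow_mul]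
        push_cast
        field_simp
    have hcomp : Tendsto (fun m : ℕ => n * m) atTop atTop := by
      apply Filter.tendsto_atTop_atTop.mpr
      intro b
      exact ⟨b, fun a ha => le_trans ha (Nat.le_mul_of_pos_left a hn)⟩
    have h2 : Tendsto (fun m : ℕ => u h (n * m) / ((n * m : ℕ) : ℝ)) atTop (𝓝 (φ h)) := by
      exact (hT h).comp hcomp
    have h3 : Tendsto (fun m : ℕ => (n : ℝ) * (u h (n * m) / ((n * m : ℕ) : ℝ)))
        atTop (𝓝 (n * φ h)) := h2.const_mul _
    rw [← hfun] at h3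
    exact tendsto_nhds_unique (hT (h ^ n)) h3
  -- φ h + φ h⁻¹ = 0
  have hinv : ∀ h : G, φ h⁻¹ = - φ h := by
    intro h
    have hsum : Tendsto (fun n : ℕ => u h n / n + u h⁻¹ n / n) atTop (𝓝 (φ h + φ h⁻¹)) :=
      (hT h).add (hT h⁻¹)
    have hzero : Tendsto (fun n : ℕ => u h n / n + u h⁻¹ n / n) atTop (𝓝 0) := by
      apply squeeze_zero_norm _ (tendsto_const_div_atTop_nhds_zero_nat 4)
      intro n
      rcases Nat.eq_zero_or_pos n with rfl | hn
      · simp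
      · have hnR : (0:ℝ) < n := by exact_mod_cast hn
        have h1 := hd (h ^ n) ((h ^ n)⁻¹)
        rw [mul_inv_cancel] at h1
        have h2 : |φ₀ (h ^ n) + φ₀ ((h ^ n)⁻¹)| ≤ 2 := by
          have := abs_le.mp h1
          have := abs_le.mp hone
          rw [abs_le]
          constructor <;> linarith [(abs_le.mp h1).1, (abs_le.mp h1).2,
            (abs_le.mp hone).1, (abs_le.mp hone).2]
        have h3 : u h n / n + u h⁻¹ n / n = (φ₀ (h ^ n) + φ₀ ((h ^ n)⁻¹) + 2) / n := by
          rw [← add_div]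
          congr 1
          simp only [hu, inv_pow]
          ring
        rw [h3, Real.norm_eq_abs, abs_div, abs_of_pos hnR, div_le_div_iff₀ hnR hnR]
        have h4 : |φ₀ (h ^ n) + φ₀ ((h ^ n)⁻¹) + 2| ≤ 4 := by
          rw [abs_le]
          constructor <;> linarith [(abs_le.mp h2).1, (abs_le.mp h2).2]
        nlinarith [abs_nonneg (φ₀ (h ^ n) + φ₀ ((h ^ n)⁻¹) + 2)]
    have := tendsto_nhds_unique hsum hzero
    linarith
  -- homogeneity
  have hhom : IsHomogeneous φ := by
    intro h n
    cases n with
    | ofNat m =>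
      rcases Nat.eq_zero_or_pos m with rfl | hm
      · simpa using hφ1
      · have h1 := hpow h m hm
        rw [Int.ofNat_eq_coe, zpow_natCast]
        rw [h1]
        push_cast
        ring
    | negSucc m =>
      have h1 := hpow h (m + 1) (by omega)
      rw [zpow_negSucc, hinv (h ^ (m + 1)), h1]
      push_cast
      ring
  -- quasimorphism
  have hqm : IsQuasimorphism φ := by
    refine ⟨4, ?_⟩
    rintro r ⟨a, b, rfl⟩
    have h1 := hclose (a * b)
    have h2 := hclose a
    have h3 := hclose b
    have h4 := hd a b
    rw [abs_le] at h1 h2 h3 h4 ⊢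
    constructor <;> linarith [h1.1, h1.2, h2.1, h2.2, h3.1, h3.2, h4.1, h4.2]
  exact ⟨φ, hqm, hhom, hclose⟩

end SclAux

set_option maxHeartbeats 1000000 in
/-- If every homogeneous quasimorphism on `G` is a homomorphism, then `scl` vanishes
on the commutator subgroup. -/
theorem scl_eq_zero_of_no_quasimorphisms {G : Type*} [Group G]
    (hyp : ∀ φ : G → ℝ, IsQuasimorphism φ → IsHomogeneous φ →
      ∀ a b : G, φ (a * b) = φ a + φ b)
    (g : G) (hg : g ∈ commutator G) :
    scl g = 0 := by
  classical
  by_contra h0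
  have hSne : {x : ℝ | ∃ n : ℕ, 0 < n ∧ x = (cl (g ^ n) : ℝ) / n}.Nonempty :=
    ⟨(cl (g ^ 1) : ℝ) / (1:ℕ), 1, one_pos, rfl⟩
  have hSbb : ∀ x ∈ {x : ℝ | ∃ n : ℕ, 0 < n ∧ x = (cl (g ^ n) : ℝ) / n}, 0 ≤ x := by
    rintro x ⟨n, hn, rfl⟩
    positivity
  have hge : 0 ≤ scl g := le_csInf hSne hSbb
  have hc : 0 < scl g := lt_of_le_of_ne hge (Ne.symm h0)
  obtain ⟨M, hM⟩ := exists_nat_gt (20 / scl g)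
  have hM20 : 20 < (M : ℝ) * scl g := by
    rw [div_lt_iff₀ hc] at hM
    linarith
  have hM1 : 1 ≤ M := by
    by_contra hM0
    push_neg at hM0
    have hMeq : M = 0 := by omega
    rw [hMeq] at hM20
    norm_num at hM20
  set w := g ^ M with hw
  have hwmem : w ∈ commutator G := Subgroup.pow_mem _ hg M
  have hwW := SclAux.single_mem_Wsub (G := G) hwmem
  -- the key lower bound on the filling cost of δ_w
  have hlow : ∀ r ∈ SclAux.SPr (Finsupp.single w (1:ℝ)), (5:ℝ) ≤ r := by
    rintro r ⟨t, f, hsum, rfl⟩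
    set A : G × G → G → ℚ := fun i z => ((SclAux.Aint i z : ℤ) : ℚ) with hA
    set b : G → ℚ := fun z => if w = z then 1 else 0 with hb
    have hpt : ∀ z : G, ∑ i ∈ t, f i * ((A i z : ℚ) : ℝ) = ((b z : ℚ) : ℝ) := by
      intro z
      have h1 := DFunLike.congr_fun hsum z
      rw [Finset.sum_apply'] at h1
      have h2 : ∀ i ∈ t, (f i • SclAux.tri i) z = f i * ((A i z : ℚ) : ℝ) := by
        intro i _
        rw [Finsupp.smul_apply, SclAux.tri_apply, smul_eq_mul, hA]
        push_cast
        ring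
      rw [Finset.sum_congr rfl h2] at h1
      rw [h1, Finsupp.single_apply, hb]
      split_ifs with hwz <;> simp [hwz]
    set ε₀ : ℝ := 1 / (t.card + 1) with hε₀def
    have hε₀ : 0 < ε₀ := by positivity
    obtain ⟨c', hce, hcb⟩ := SclAux.rat_approx t A b f hpt ε₀ hε₀
    set N : ℕ := ∏ i ∈ t, (c' i).den with hN
    have hNpos : 0 < N := Finset.prod_pos (fun i _ => (c' i).den_pos)
    have hNR : (0:ℝ) < N := by exact_mod_cast hNpos
    set nn : G × G → ℤ := fun i => (c' i).num * ((N / (c' i).den : ℕ) : ℤ) with hnndef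
    have hnn : ∀ i ∈ t, ((nn i : ℤ) : ℚ) = c' i * N := by
      intro i hi
      have hdvd : (c' i).den ∣ N := Finset.dvd_prod_of_mem _ hi
      have hk : (c' i).den * (N / (c' i).den) = N := Nat.mul_div_cancel' hdvd
      have hqd : (c' i) * ((c' i).den : ℚ) = (c' i).num := Rat.mul_den_eq_num _
      calc ((nn i : ℤ) : ℚ) = ((c' i).num : ℚ) * ((N / (c' i).den : ℕ) : ℚ) := by
            simp only [hnndef, Int.cast_mul, Int.cast_natCast]
        _ = (c' i * ((c' i).den : ℚ)) * ((N / (c' i).den : ℕ) : ℚ) := by rw [hqd]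
        _ = c' i * (((c' i).den * (N / (c' i).den) : ℕ) : ℚ) := by
            push_cast
            ring
        _ = c' i * N := by rw [hk]
    have heqZ : ∀ z : G, ∑ i ∈ t, nn i * SclAux.Aint i z = (N : ℤ) * (if w = z then 1 else 0) := by
      intro z
      have hq : ((∑ i ∈ t, nn i * SclAux.Aint i z : ℤ) : ℚ) =
          (((N : ℤ) * (if w = z then 1 else 0) : ℤ) : ℚ) := by
        push_cast
        calc ∑ i ∈ t, ((nn i : ℤ) : ℚ) * ((SclAux.Aint i z : ℤ) : ℚ)
            = ∑ i ∈ t, (c' i * N) * A i z := by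
              refine Finset.sum_congr rfl (fun i hi => ?_)
              rw [hnn i hi, hA]
          _ = N * ∑ i ∈ t, c' i * A i z := by
              rw [Finset.mul_sum]
              refine Finset.sum_congr rfl (fun i hi => by ring)
          _ = N * b z := by rw [hce z]
          _ = (N : ℚ) * (if w = z then 1 else 0) := by rw [hb]
      exact_mod_cast hq
    obtain ⟨m, hmle, hmprod⟩ := SclAux.cl_bound_of_int_filling w N t nn heqZ
    have hclle : cl (w ^ N) ≤ m := cl_le hmprod
    -- scl g lower bound on cl (g ^ (M * N))
    have hMN : 0 < M * N := Nat.mul_pos (by omega) hNpos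
    have hMNR : (0:ℝ) < (M * N : ℕ) := by exact_mod_cast hMN
    have hsclle : scl g ≤ (cl (g ^ (M * N)) : ℝ) / (M * N : ℕ) :=
      csInf_le ⟨0, fun x hx => hSbb x hx⟩ ⟨M * N, hMN, rfl⟩
    have hwN : w ^ N = g ^ (M * N) := by rw [hw, ← pow_mul]
    have hclbig : scl g * ((M * N : ℕ) : ℝ) ≤ (cl (w ^ N) : ℝ) := by
      rw [hwN]
      rw [le_div_iff₀ hMNR] at hsclle
      linarith
    -- cost estimate
    have habs : ∀ i ∈ t, |((nn i : ℤ) : ℝ)| = |(c' i : ℝ)| * N := by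
      intro i hi
      have h1 : ((nn i : ℤ) : ℝ) = (c' i : ℝ) * N := by
        have h2 := hnn i hi
        have h3 : (((nn i : ℤ) : ℚ) : ℝ) = ((c' i * N : ℚ) : ℝ) := by rw [h2]
        push_cast at h3
        exact h3
      rw [h1, abs_mul, abs_of_pos hNR]
    have hcbound : ∀ i ∈ t, |(c' i : ℝ)| ≤ |f i| + ε₀ := by
      intro i hi
      have h1 := hcb i hi
      calc |(c' i : ℝ)| = |f i + ((c' i : ℝ) - f i)| := by congr 1; ring
        _ ≤ |f i| + |(c' i : ℝ) - f i| := abs_add_le _ _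
        _ ≤ |f i| + ε₀ := by linarith
    have hcard : (t.card : ℝ) * ε₀ ≤ 1 := by
      rw [hε₀def]
      rw [mul_one_div, div_le_one (by positivity)]
      linarith
    have hsumabs : ∑ i ∈ t, |((nn i : ℤ) : ℝ)| ≤ N * ((∑ i ∈ t, |f i|) + 1) := by
      calc ∑ i ∈ t, |((nn i : ℤ) : ℝ)| = ∑ i ∈ t, |(c' i : ℝ)| * N :=
            Finset.sum_congr rfl habs
        _ ≤ ∑ i ∈ t, (|f i| + ε₀) * N := by
            refine Finset.sum_le_sum (fun i hi => ?_)
            exact mul_le_mul_of_nonneg_right (hcbound i hi) hNR.le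
        _ = ((∑ i ∈ t, |f i|) + t.card * ε₀) * N := by
            rw [← Finset.sum_mul]
            congr 1
            rw [Finset.sum_add_distrib]
            simp
        _ ≤ ((∑ i ∈ t, |f i|) + 1) * N := by
            have h5 : (0:ℝ) ≤ N := hNR.le
            nlinarith
        _ = N * ((∑ i ∈ t, |f i|) + 1) := by ring
    -- combine
    have hmR : (m : ℝ) ≤ 3 * (N * ((∑ i ∈ t, |f i|) + 1)) + N := by
      have h1 : (m : ℝ) ≤ ((∑ i ∈ t, 3 * (nn i).natAbs : ℕ) : ℝ) + N := by
        exact_mod_cast hmle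
      have h2 : ((∑ i ∈ t, 3 * (nn i).natAbs : ℕ) : ℝ) = 3 * ∑ i ∈ t, |((nn i : ℤ) : ℝ)| := by
        push_cast [Nat.cast_natAbs]
        rw [Finset.mul_sum]
      rw [h2] at h1
      linarith
    have hclR : (cl (w ^ N) : ℝ) ≤ (m : ℝ) := by exact_mod_cast hclle
    have hMNcast : ((M * N : ℕ) : ℝ) = (M : ℝ) * N := by push_cast; ring
    set r := ∑ i ∈ t, |f i| with hrdef
    have e1 : 20 * (N:ℝ) < ((M:ℝ) * scl g) * N :=
      mul_lt_mul_of_pos_right hM20 hNR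
    have e2 : ((M:ℝ) * scl g) * N ≤ (cl (w ^ N) : ℝ) := by
      rw [hMNcast] at hclbig
      calc ((M:ℝ) * scl g) * N = scl g * ((M:ℝ) * N) := by ring
        _ ≤ (cl (w ^ N) : ℝ) := hclbig
    have e3 : (cl (w ^ N) : ℝ) ≤ 3 * (N * (r + 1)) + N := hclR.trans hmR
    have hexp : 3 * ((N:ℝ) * (r + 1)) + N = 3 * ((N:ℝ) * r) + 4 * N := by ring
    have e4 : 16 * (N:ℝ) < 3 * ((N:ℝ) * r) := by
      rw [hexp] at e3
      linarith
    by_contra hr5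
    push_neg at hr5
    have e5 : (N:ℝ) * r ≤ (N:ℝ) * 5 := by
      apply mul_le_mul_of_nonneg_left hr5.le hNR.le
    linarith
  -- build the quasimorphism and contradict
  obtain ⟨φ₀, hφd, hφw⟩ := SclAux.exists_phi0 w hwW hlow
  obtain ⟨φ, hqm, hhom, hclose⟩ := SclAux.homogenize hφd
  have hadd := hyp φ hqm hhom
  have hφinv : ∀ x : G, φ x⁻¹ = - φ x := by
    intro x
    have h1 := hhom x (-1)
    rw [zpow_neg, zpow_one] at h1
    rw [h1]
    push_cast
    ring
  have hφcomm : ∀ a b : G, φ ⁅a, b⁆ = 0 := by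
    intro a b
    rw [commutatorElement_def, hadd, hadd, hadd, hφinv, hφinv]
    ring
  have hφ1 : φ 1 = 0 := by
    have h1 := hadd 1 1
    rw [one_mul] at h1
    linarith
  have hφw0 : φ w = 0 := by
    obtain ⟨m', a, b, hab⟩ := exists_isProd_of_mem_commutator hwmem
    rw [hab]
    have hlist : ∀ l : List G, (∀ x ∈ l, φ x = 0) → φ l.prod = 0 := by
      intro l
      induction l with
      | nil => intro _; simpa using hφ1
      | cons x tl ih =>
        intro hl
        rw [List.prod_cons, hadd, hl x (by simp), ih (fun y hy => hl y (by simp [hy]))]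
        ring
    apply hlist
    intro x hx
    rw [List.mem_ofFn] at hx
    obtain ⟨i, rfl⟩ := hx
    exact hφcomm _ _
  have hcl := hclose w
  rw [hφw0] at hcl
  have h7 := (abs_le.mp hcl).1
  linarith
end
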